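/- There exists a constant C > 0 such that for all 0 < t ≤ 1, all x, y ∈ ℝ^d and all 1 ≤ j ≤ d, |(y_j + x_j) · k_t^0(x,y)| ≤ C t^{−(d+1)/2} e^{−|x−y|²/(4t)}. -/

import Mathlib

open Real

/-- The classical Hermite (Mehler) heat kernel on `ℝ^d`:
`k_t^0(x,y) = (2π sinh(2t))^{-d/2} exp(-(1/4)(tanh(t)|x+y|² + coth(t)|x-y|²))`,
where `coth t = cosh t / sinh t`. -/
noncomputable def mehlerKernel (d : ℕ) (t : ℝ) (x y : EuclideanSpace ℝ (Fin d)) : ℝ :=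
  (2 * Real.pi * Real.sinh (2 * t)) ^ (-(d : ℝ) / 2) *
    Real.exp (-(1 / 4) *
      (Real.tanh t * ‖x + y‖ ^ 2 + (Real.cosh t / Real.sinh t) * ‖x - y‖ ^ 2))

private lemma sinh_le_mul_cosh {t : ℝ} (ht : 0 ≤ t) : Real.sinh t ≤ t * Real.cosh t := by
  have hder : ∀ s : ℝ, HasDerivAt (fun u => u * Real.cosh u - Real.sinh u) (s * Real.sinh s) s := by
    intro s
    have h1 := (hasDerivAt_id s).mul (Real.hasDerivAt_cosh s)
    have h2 := Real.hasDerivAt_sinh s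
    have h3 := h1.sub h2
    refine h3.congr_deriv ?_
    simp only [id_eq]; ring
  have hmono : MonotoneOn (fun u => u * Real.cosh u - Real.sinh u) (Set.Ici (0:ℝ)) := by
    apply monotoneOn_of_deriv_nonneg (convex_Ici 0)
    · exact (Continuous.continuousOn (by continuity))
    · intro s hs
      exact (hder s).differentiableAt.differentiableWithinAt
    · intro s hs
      rw [(hder s).deriv]
      have hs' : 0 < s := by simpa using hs
      exact mul_nonneg hs'.le (Real.sinh_pos_iff.mpr hs').le
  have h0 : (0:ℝ) * Real.cosh 0 - Real.sinh 0 ≤ t * Real.cosh t - Real.sinh t :=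
    hmono (Set.mem_Ici.mpr le_rfl) (Set.mem_Ici.mpr ht) ht
  simp at h0
  linarith

private lemma mul_exp_neg_sq_le {a u : ℝ} (ha : 0 < a) (hu : 0 ≤ u) :
    u * Real.exp (-(a * u ^ 2)) ≤ (Real.sqrt a)⁻¹ := by
  have hsa : 0 < Real.sqrt a := Real.sqrt_pos.mpr ha
  rw [Real.exp_neg, mul_inv_le_iff₀ (Real.exp_pos _), inv_mul_eq_div, le_div_iff₀ hsa]
  set v := Real.sqrt a * u with hv
  have hv0 : 0 ≤ v := mul_nonneg hsa.le hu
  have hvsq : v ^ 2 = a * u ^ 2 := by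
    rw [hv, mul_pow, Real.sq_sqrt ha.le]
  calc u * Real.sqrt a = v := by rw [hv]; ring
    _ ≤ v ^ 2 + 1 := by nlinarith [sq_nonneg (v - 1)]
    _ ≤ Real.exp (v ^ 2) := by
        have := Real.add_one_le_exp (v ^ 2); linarith
    _ = Real.exp (a * u ^ 2) := by rw [hvsq]

private lemma coord_abs_le_norm {d : ℕ} (v : EuclideanSpace ℝ (Fin d)) (j : Fin d) :
    |v j| ≤ ‖v‖ := by
  rw [EuclideanSpace.norm_eq, ← Real.sqrt_sq_eq_abs]
  apply Real.sqrt_le_sqrt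
  simpa using Finset.single_le_sum (f := fun i => v i ^ 2) (fun i _ => sq_nonneg _)
    (Finset.mem_univ j)

/-- There exists `C > 0` such that for all `0 < t ≤ 1`, all `x, y ∈ ℝ^d` and all
`1 ≤ j ≤ d`, `|(y_j + x_j) k_t^0(x,y)| ≤ C t^{-(d+1)/2} e^{-|x-y|²/(4t)}`. -/
theorem mehlerKernel_coord_sum_bound (d : ℕ) (hd : 1 ≤ d) :
    ∃ C > (0 : ℝ), ∀ t : ℝ, 0 < t → t ≤ 1 →
      ∀ x y : EuclideanSpace ℝ (Fin d), ∀ j : Fin d,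
        |(y j + x j) * mehlerKernel d t x y| ≤
          C * t ^ (-((d : ℝ) + 1) / 2) * Real.exp (-‖x - y‖ ^ 2 / (4 * t)) := by
  refine ⟨(4 * Real.pi) ^ (-(d : ℝ) / 2) * (2 * Real.sqrt 3), ?_, ?_⟩
  · positivity
  intro t ht ht1 x y j
  have hsinh : 0 < Real.sinh t := Real.sinh_pos_iff.mpr ht
  have hcosh : 0 < Real.cosh t := Real.cosh_pos t
  have htanh : 0 < Real.tanh t := by
    rw [Real.tanh_eq_sinh_div_cosh]; positivity
  -- tanh t ≥ t / 3
  have hcosh3 : Real.cosh t < 3 := by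
    rw [Real.cosh_eq]
    have h1 : Real.exp t ≤ Real.exp 1 := Real.exp_le_exp.mpr ht1
    have h2 : Real.exp (-t) ≤ 1 := by
      rw [Real.exp_le_one_iff]; linarith
    have h3 : Real.exp 1 < 2.7182818286 := Real.exp_one_lt_d9
    linarith
  have htanh_ge : t / 3 ≤ Real.tanh t := by
    rw [Real.tanh_eq_sinh_div_cosh, div_le_div_iff₀ (by norm_num) hcosh]
    have hst : t ≤ Real.sinh t := (Real.self_lt_sinh_iff.mpr ht).le
    nlinarith
  -- coth t ≥ 1/t
  have hcoth : 1 / t ≤ Real.cosh t / Real.sinh t := by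
    rw [div_le_div_iff₀ ht hsinh]
    have := sinh_le_mul_cosh ht.le
    linarith
  -- split the exponential
  have hE : mehlerKernel d t x y =
      (2 * Real.pi * Real.sinh (2 * t)) ^ (-(d : ℝ) / 2) *
      (Real.exp (-(Real.tanh t / 4 * ‖x + y‖ ^ 2)) *
       Real.exp (-(Real.cosh t / Real.sinh t / 4 * ‖x - y‖ ^ 2))) := by
    rw [mehlerKernel, ← Real.exp_add]
    ring_nf
  have hsinh2t : 0 < Real.sinh (2 * t) := Real.sinh_pos_iff.mpr (by linarith)
  have hK : 0 < (2 * Real.pi * Real.sinh (2 * t)) ^ (-(d : ℝ) / 2) := by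
    apply Real.rpow_pos_of_pos
    positivity
  -- bound the prefactor
  have hA : (2 * Real.pi * Real.sinh (2 * t)) ^ (-(d : ℝ) / 2) ≤
      (4 * Real.pi) ^ (-(d : ℝ) / 2) * t ^ (-(d : ℝ) / 2) := by
    rw [← Real.mul_rpow (by positivity) ht.le]
    apply Real.rpow_le_rpow_of_nonpos (by positivity)
    · have h2t : 2 * t ≤ Real.sinh (2 * t) := (Real.self_lt_sinh_iff.mpr (by linarith)).le
      have hpi : 0 < Real.pi := Real.pi_pos
      nlinarith
    · have : (0:ℝ) < d := by exact_mod_cast Nat.lt_of_lt_of_le Nat.zero_lt_one hd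
      linarith [div_nonneg this.le (by norm_num : (0:ℝ) ≤ 2)]
  -- bound the second exponential
  have hE2 : Real.exp (-(Real.cosh t / Real.sinh t / 4 * ‖x - y‖ ^ 2)) ≤
      Real.exp (-‖x - y‖ ^ 2 / (4 * t)) := by
    apply Real.exp_le_exp.mpr
    rw [neg_div, neg_le_neg_iff]
    rw [div_eq_mul_inv (‖x - y‖ ^ 2), mul_comm (‖x - y‖ ^ 2)]
    have h4t : ((4:ℝ) * t)⁻¹ = 1 / t / 4 := by field_simp
    rw [h4t]
    gcongr
  -- bound the coordinate times first exponential
  have hcoordE1 : |y j + x j| * Real.exp (-(Real.tanh t / 4 * ‖x + y‖ ^ 2)) ≤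
      2 * Real.sqrt 3 * t ^ (-(1 : ℝ) / 2) := by
    have h1 : |y j + x j| ≤ ‖x + y‖ := by
      have : y j + x j = (x + y) j := by
        simp [PiLp.add_apply]; ring
      rw [this]
      exact coord_abs_le_norm _ _
    calc |y j + x j| * Real.exp (-(Real.tanh t / 4 * ‖x + y‖ ^ 2))
        ≤ ‖x + y‖ * Real.exp (-(Real.tanh t / 4 * ‖x + y‖ ^ 2)) := by
          gcongr
      _ ≤ (Real.sqrt (Real.tanh t / 4))⁻¹ :=
          mul_exp_neg_sq_le (by positivity) (norm_nonneg _)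
      _ ≤ (Real.sqrt (t / 3 / 4))⁻¹ := by
          have hs : Real.sqrt (t / 3 / 4) ≤ Real.sqrt (Real.tanh t / 4) :=
            Real.sqrt_le_sqrt (by linarith)
          exact inv_anti₀ (by positivity) hs
      _ = 2 * Real.sqrt 3 * t ^ (-(1 : ℝ) / 2) := by
          rw [show t / 3 / 4 = t / 12 by ring,
            show (-(1:ℝ) / 2) = -(1/2) by norm_num, Real.rpow_neg ht.le,
            ← Real.sqrt_eq_rpow, Real.sqrt_div ht.le, inv_div, div_eq_mul_inv]
          congr 1
          rw [show (12:ℝ) = 2^2*3 by norm_num, Real.sqrt_mul (by positivity),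
            Real.sqrt_sq (by norm_num)]
  -- combine
  have hmpos : 0 < mehlerKernel d t x y := by
    rw [hE]; positivity
  rw [abs_mul, abs_of_pos hmpos, hE]
  have hrpow : t ^ (-((d : ℝ) + 1) / 2) = t ^ (-(d : ℝ) / 2) * t ^ (-(1 : ℝ) / 2) := by
    rw [← Real.rpow_add ht]; congr 1; ring
  rw [hrpow]
  calc |y j + x j| *
        ((2 * Real.pi * Real.sinh (2 * t)) ^ (-(d : ℝ) / 2) *
          (Real.exp (-(Real.tanh t / 4 * ‖x + y‖ ^ 2)) *
           Real.exp (-(Real.cosh t / Real.sinh t / 4 * ‖x - y‖ ^ 2))))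
      = (|y j + x j| * Real.exp (-(Real.tanh t / 4 * ‖x + y‖ ^ 2))) *
        (2 * Real.pi * Real.sinh (2 * t)) ^ (-(d : ℝ) / 2) *
        Real.exp (-(Real.cosh t / Real.sinh t / 4 * ‖x - y‖ ^ 2)) := by ring
    _ ≤ (2 * Real.sqrt 3 * t ^ (-(1 : ℝ) / 2)) *
        ((4 * Real.pi) ^ (-(d : ℝ) / 2) * t ^ (-(d : ℝ) / 2)) *
        Real.exp (-‖x - y‖ ^ 2 / (4 * t)) := by
        have hn1 : 0 ≤ |y j + x j| * Real.exp (-(Real.tanh t / 4 * ‖x + y‖ ^ 2)) := by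
          positivity
        have hn2 : 0 ≤ (2 * Real.pi * Real.sinh (2 * t)) ^ (-(d : ℝ) / 2) := hK.le
        exact mul_le_mul (mul_le_mul hcoordE1 hA hn2 (by positivity)) hE2
          (Real.exp_pos _).le (by positivity)
    _ = (4 * Real.pi) ^ (-(d : ℝ) / 2) * (2 * Real.sqrt 3) *
        (t ^ (-(d : ℝ) / 2) * t ^ (-(1 : ℝ) / 2)) *
        Real.exp (-‖x - y‖ ^ 2 / (4 * t)) := by ring
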